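/- Convolution bounds (Lemma 3.2). Let d ≥ 1 and let a ≥ b > 0. Let f, g: ℤ^d → ℝ and c₁, c₂ > 0 satisfy 0 ≤ f(x) ≤ c₁(1+|x|)^{−a} and 0 ≤ g(x) ≤ c₂(1+|x|)^{−b} for all x ∈ ℤ^d. Then there exists c₃ > 0 (depending on d, a, b, c₁, c₂) such that for all x ∈ ℤ^d: (i) if a > d, then (f∗g)(x) := ∑_{y ∈ ℤ^d} f(y) g(x−y) ≤ c₃ (1+|x|)^{−b}; (ii) if a < d and a + b > d, then (f∗g)(x) ≤ c₃ (1+|x|)^{d−(a+b)}. -/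

import Mathlib

open scoped ENNReal

/-- The vertex set of the hypercubic lattice `ℤ^d`. -/
abbrev Vtx (d : ℕ) := Fin d → ℤ

/-- The Euclidean norm of a point of `ℤ^d`. -/
noncomputable def znorm {d : ℕ} (x : Vtx d) : ℝ :=
  Real.sqrt (∑ i, ((x i : ℝ)) ^ 2)

namespace ConvAux

variable {d : ℕ}

/-- sup norm as a natural number -/
def Nn (y : Vtx d) : ℕ := Finset.univ.sup fun i => (y i).natAbs

lemma natAbs_le_Nn (y : Vtx d) (i : Fin d) : (y i).natAbs ≤ Nn y :=
  Finset.le_sup (f := fun i => (y i).natAbs) (Finset.mem_univ i)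

lemma znorm_nonneg (y : Vtx d) : 0 ≤ znorm y := Real.sqrt_nonneg _

/-- embedding into Euclidean space -/
noncomputable def emb (y : Vtx d) : EuclideanSpace ℝ (Fin d) := WithLp.toLp 2 (fun i => (y i : ℝ))

lemma znorm_eq_norm (y : Vtx d) : znorm y = ‖emb y‖ := by
  rw [EuclideanSpace.norm_eq, znorm]
  congr 1
  refine Finset.sum_congr rfl fun i _ => ?_
  rw [emb, Real.norm_eq_abs, sq_abs]

lemma emb_sub (x y : Vtx d) : emb (x - y) = emb x - emb y := by
  ext i
  simp [emb]

lemma znorm_triangle (x y : Vtx d) : znorm x ≤ znorm y + znorm (x - y) := by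
  rw [znorm_eq_norm, znorm_eq_norm, znorm_eq_norm, emb_sub]
  simpa using norm_add_le (emb y) (emb x - emb y)

lemma Nn_le_znorm (hd : 1 ≤ d) (y : Vtx d) : (Nn y : ℝ) ≤ znorm y := by
  have : Nonempty (Fin d) := Fin.pos_iff_nonempty.mp hd
  obtain ⟨i, _, hi⟩ := Finset.exists_mem_eq_sup Finset.univ Finset.univ_nonempty
    (fun i => (y i).natAbs)
  have key : ((Nn y : ℝ)) ^ 2 ≤ ∑ j, ((y j : ℝ)) ^ 2 := by
    calc ((Nn y : ℝ)) ^ 2 = ((y i : ℝ)) ^ 2 := by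
          rw [Nn, hi, Nat.cast_natAbs]
          push_cast
          rw [sq_abs]
      _ ≤ ∑ j, ((y j : ℝ)) ^ 2 :=
          Finset.single_le_sum (f := fun j => ((y j : ℝ))^2) (fun j _ => by positivity)
            (Finset.mem_univ i)
  calc (Nn y : ℝ) = Real.sqrt (((Nn y : ℝ))^2) := (Real.sqrt_sq (by positivity)).symm
    _ ≤ znorm y := Real.sqrt_le_sqrt key

lemma znorm_le_d_Nn (y : Vtx d) : znorm y ≤ (d : ℝ) * Nn y := by
  rw [znorm]
  have h1 : ∑ i, ((y i : ℝ)) ^ 2 ≤ ((d : ℝ) * Nn y) ^ 2 := by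
    calc ∑ i, ((y i : ℝ)) ^ 2 ≤ ∑ _i : Fin d, ((Nn y : ℝ)) ^ 2 := by
          refine Finset.sum_le_sum fun i _ => ?_
          have := natAbs_le_Nn y i
          have h2 : |(y i : ℝ)| ≤ (Nn y : ℝ) := by
            rw [← Int.cast_abs, Int.abs_eq_natAbs]
            exact_mod_cast this
          calc ((y i : ℝ))^2 = |(y i : ℝ)|^2 := (sq_abs _).symm
            _ ≤ ((Nn y : ℝ))^2 := pow_le_pow_left₀ (abs_nonneg _) h2 2
      _ = (d : ℝ) * ((Nn y : ℝ))^2 := by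
          rw [Finset.sum_const, nsmul_eq_mul]
          simp
      _ ≤ ((d : ℝ) * Nn y) ^ 2 := by
          rw [mul_pow]
          rcases Nat.eq_zero_or_pos d with h|h
          · simp [h]
          · have h1 : (1:ℝ) ≤ d := by exact_mod_cast h
            have h2 : (0:ℝ) ≤ ((Nn y : ℝ))^2 := by positivity
            nlinarith [mul_le_mul_of_nonneg_right h1 (mul_nonneg (by positivity : (0:ℝ) ≤ (d:ℝ)) h2)]
  calc Real.sqrt (∑ i, ((y i : ℝ)) ^ 2) ≤ Real.sqrt (((d:ℝ) * Nn y)^2) := Real.sqrt_le_sqrt h1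
    _ = (d : ℝ) * (Nn y : ℝ) := Real.sqrt_sq (by positivity)

end ConvAux
namespace ConvAux

variable {d : ℕ}

/-- the box of radius `n` in the sup norm -/
noncomputable def box (d n : ℕ) : Finset (Vtx d) :=
  Fintype.piFinset fun _ => Finset.Icc (-(n : ℤ)) (n : ℤ)

lemma mem_box {n : ℕ} {y : Vtx d} : y ∈ box d n ↔ Nn y ≤ n := by
  rw [box, Fintype.mem_piFinset, Nn]
  simp only [Finset.mem_Icc, Finset.sup_le_iff, Finset.mem_univ, true_implies]
  exact forall_congr' fun i => by omega

lemma card_box (n : ℕ) : (box d n).card = (2 * n + 1) ^ d := by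
  rw [box, Fintype.card_piFinset]
  simp only [Int.card_Icc]
  rw [Finset.prod_const, Finset.card_univ, Fintype.card_fin]
  congr 1
  omega

lemma box_mono {m n : ℕ} (h : m ≤ n) : box d m ⊆ box d n := fun y hy =>
  mem_box.mpr (le_trans (mem_box.mp hy) h)

/-- the cardinality of the sup-norm sphere of radius `n` -/
noncomputable def scard (d n : ℕ) : ℕ := ((box d n).filter fun y => Nn y = n).card

lemma filter_box_eq_sdiff (n : ℕ) :
    ((box d (n+1)).filter fun y => Nn y = n + 1) = box d (n+1) \ box d n := by
  ext y
  simp only [Finset.mem_filter, Finset.mem_sdiff, mem_box]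
  omega

lemma scard_zero : scard d 0 = 1 := by
  rw [scard]
  have : ((box d 0).filter fun y => Nn y = 0) = box d 0 := by
    apply Finset.filter_true_of_mem
    intro y hy
    exact Nat.le_zero.mp (mem_box.mp hy)
  rw [this, card_box]
  simp

lemma scard_succ (n : ℕ) : scard d (n+1) = (2*(n+1)+1)^d - (2*n+1)^d := by
  rw [scard, filter_box_eq_sdiff, Finset.card_sdiff_of_subset (box_mono (Nat.le_succ n)),
    card_box, card_box]

/-- real bound on sphere cardinality -/
lemma scard_le (hd : 1 ≤ d) (n : ℕ) : (scard d n : ℝ) ≤ (d : ℝ) * 2^d * (1 + n) ^ (d - 1) := by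
  have h2 : (1:ℝ) ≤ (d:ℝ) := by exact_mod_cast hd
  cases n with
  | zero =>
    rw [scard_zero]
    simp only [Nat.cast_one, Nat.cast_zero, add_zero, one_pow, mul_one]
    calc (1:ℝ) ≤ (d:ℝ) := h2
      _ ≤ (d:ℝ) * 2^d := by nlinarith [one_le_pow₀ (by norm_num : (1:ℝ) ≤ 2) (n := d)]
  | succ n =>
    rw [scard_succ]
    have hle : (2*n+1)^d ≤ (2*(n+1)+1)^d := Nat.pow_le_pow_left (by omega) d
    have hcast : ((( 2*(n+1)+1)^d - (2*n+1)^d : ℕ) : ℝ)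
        = ((2*(n+1)+1 : ℝ))^d - ((2*n+1 : ℝ))^d := by
      rw [Nat.cast_sub hle]
      push_cast
      ring_nf
    rw [hcast]
    set x : ℝ := (2*(n+1)+1 : ℝ) with hx
    set y : ℝ := (2*n+1 : ℝ) with hy
    have hxy : x - y = 2 := by rw [hx, hy]; ring
    have hgeom := geom_sum₂_mul x y d
    have hn0 : (0:ℝ) ≤ (n:ℝ) := Nat.cast_nonneg n
    have hy1 : (1:ℝ) ≤ y := by rw [hy]; linarith
    have hyx : y ≤ x := by rw [hx, hy]; linarith
    have hsum : (∑ i ∈ Finset.range d, x ^ i * y ^ (d - 1 - i)) ≤ (d:ℝ) * x^(d-1) := by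
      calc (∑ i ∈ Finset.range d, x ^ i * y ^ (d - 1 - i))
          ≤ ∑ _i ∈ Finset.range d, x^(d-1) := by
            refine Finset.sum_le_sum fun i hi => ?_
            have hi' : i ∈ Finset.range d := hi
            rw [Finset.mem_range] at hi'
            calc x ^ i * y ^ (d-1-i) ≤ x ^ i * x ^ (d-1-i) := by
                  have : (0:ℝ) ≤ x ^ i := by positivity
                  exact mul_le_mul_of_nonneg_left (pow_le_pow_left₀ (by linarith) hyx _) this
              _ = x ^ (i + (d-1-i)) := by rw [pow_add]
              _ ≤ x ^ (d-1) := by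
                  apply pow_le_pow_right₀ (by linarith [hy1, hyx])
                  omega
        _ = (d:ℝ) * x^(d-1) := by rw [Finset.sum_const, Finset.card_range, nsmul_eq_mul]
    have hxb : x ≤ 2 * (1 + (n+1:ℕ) : ℝ) := by rw [hx]; push_cast; linarith
    calc x^d - y^d = (∑ i ∈ Finset.range d, x ^ i * y ^ (d - 1 - i)) * (x - y) := hgeom.symm
      _ = (∑ i ∈ Finset.range d, x ^ i * y ^ (d - 1 - i)) * 2 := by rw [hxy]
      _ ≤ ((d:ℝ) * x^(d-1)) * 2 := by
          apply mul_le_mul_of_nonneg_right hsum (by norm_num)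
      _ ≤ ((d:ℝ) * (2 * (1 + (n+1:ℕ) : ℝ))^(d-1)) * 2 := by
          have hxpos : (0:ℝ) ≤ x := by rw [hx]; positivity
          have := pow_le_pow_left₀ hxpos hxb (d-1)
          nlinarith [this, h2]
      _ ≤ (d : ℝ) * 2^d * (1 + (n+1:ℕ)) ^ (d - 1) := by
          rw [mul_pow]
          have h1n : (0:ℝ) ≤ (1 + (n+1:ℕ) : ℝ) := by positivity
          have h2d : (2:ℝ)^(d-1) * 2 ≤ 2^d := by
            rw [← pow_succ]
            apply pow_le_pow_right₀ (by norm_num)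
            omega
          have hp : (0:ℝ) ≤ ((1 + (n+1:ℕ):ℝ)) ^ (d-1) := by positivity
          nlinarith [mul_le_mul_of_nonneg_left (mul_le_mul_of_nonneg_right h2d hp)
            (le_trans zero_le_one h2)]

end ConvAux
namespace ConvAux

/-- Bernoulli-type key inequality -/
lemma key_ineq {q k : ℝ} (hq0 : 0 ≤ q) (hq1 : q ≤ 1) (hk : 0 ≤ k) :
    (k / (k+1)) ^ q ≤ 1 - q / (k+1) := by
  have h1 : (0:ℝ) < k + 1 := by linarith
  have hs : (-1:ℝ) ≤ -(1/(k+1)) := by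
    rw [neg_le_neg_iff, div_le_one h1]; linarith
  have h := rpow_one_add_le_one_add_mul_self hs hq0 hq1
  have he : 1 + -(1/(k+1)) = k / (k+1) := by field_simp; ring
  rw [he] at h
  calc (k/(k+1))^q ≤ 1 + q * -(1/(k+1)) := h
    _ = 1 - q/(k+1) := by ring

/-- lower Bernoulli for all positive exponents -/
lemma bern_lower {p u : ℝ} (hp : 0 < p) (hu : 1 ≤ u) :
    1 + p / (1 + u) ≤ (1 + 1/u) ^ p := by
  have hu0 : (0:ℝ) < u := by linarith
  rcases le_or_gt 1 p with hp1 | hp1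
  · have hs : (-1:ℝ) ≤ 1/u := le_trans (by norm_num) (by positivity : (0:ℝ) ≤ 1/u)
    have h := one_add_mul_self_le_rpow_one_add hs hp1
    have : p / (1+u) ≤ p * (1/u) := by
      rw [mul_one_div]
      apply div_le_div_of_nonneg_left hp.le hu0
      linarith
    linarith
  · -- 0 < p < 1
    have hkey := key_ineq hp.le hp1.le hu0.le
    set x : ℝ := p / (u + 1) with hxdef
    have hx0 : 0 < x := by positivity
    have hx1 : x < 1 := by
      rw [hxdef, div_lt_one (by linarith)]
      linarith
    have h1x : 0 < 1 - x := by linarith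
    have hbase : (0:ℝ) < u / (u+1) := by positivity
    have hrpos : (0:ℝ) < (u/(u+1))^p := Real.rpow_pos_of_pos hbase p
    have step1 : 1 + x ≤ (1 - x)⁻¹ := by
      rw [← one_div, le_div_iff₀ h1x]
      nlinarith
    have step2 : (1 - x)⁻¹ ≤ ((u/(u+1))^p)⁻¹ := by
      apply inv_anti₀ hrpos
      exact hkey
    have step3 : ((u/(u+1))^p)⁻¹ = (1 + 1/u)^p := by
      rw [← Real.inv_rpow hbase.le, inv_div]
      congr 1
      field_simp
    have hq : p / (1 + u) = x := by rw [hxdef]; ring_nf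
    rw [hq]
    calc 1 + x ≤ (1-x)⁻¹ := step1
      _ ≤ ((u/(u+1))^p)⁻¹ := step2
      _ = (1 + 1/u)^p := step3

lemma ineqA {t u : ℝ} (ht : 1 < t) (hu : 1 ≤ u) :
    (t - 1) * (1+u) ^ (-t) ≤ u ^ (1-t) - (1+u) ^ (1-t) := by
  set p : ℝ := t - 1 with hp
  have hp0 : 0 < p := by rw [hp]; linarith
  have hu0 : (0:ℝ) < u := by linarith
  have h1u : (0:ℝ) < 1 + u := by linarith
  have hb := bern_lower hp0 hu
  have key : u ^ (-p) = (1+u)^(-p) * ((1+u)/u) ^ p := by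
    rw [Real.div_rpow h1u.le hu0.le, Real.rpow_neg h1u.le, Real.rpow_neg hu0.le]
    have hup : (0:ℝ) < u ^ p := Real.rpow_pos_of_pos hu0 p
    have h1up : (0:ℝ) < (1+u) ^ p := Real.rpow_pos_of_pos h1u p
    field_simp
  have he : (1:ℝ) + 1/u = (1+u)/u := by rw [add_div, div_self hu0.ne', add_comm]
  have hstep : (1+u)^(-p) * ((1+u)/u) ^ p ≥ (1+u)^(-p) * (1 + p/(1+u)) := by
    apply mul_le_mul_of_nonneg_left _ (Real.rpow_nonneg h1u.le _)
    rw [← he]; exact hb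
  have hexp : (1+u)^(-p) * (p/(1+u)) = p * (1+u)^(-t) := by
    rw [show (-t) = -p - 1 by rw [hp]; ring, Real.rpow_sub h1u, Real.rpow_one]
    field_simp
  have h1t : (1-t) = -p := by rw [hp]; ring
  rw [h1t]
  have hdist : (1+u)^(-p) * (1 + p/(1+u))
      = (1+u)^(-p) + (1+u)^(-p) * (p/(1+u)) := by ring
  clear_value p
  linarith [hstep, key, hexp, hdist]

lemma ineqB {q k : ℝ} (hq0 : 0 < q) (hq1 : q ≤ 1) (hk : 0 ≤ k) :
    q * (1+k) ^ (q-1) ≤ (1+k) ^ q - k ^ q := by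
  have h1k : (0:ℝ) < 1 + k := by linarith
  have hkey := key_ineq hq0.le hq1 hk
  have hmul := mul_le_mul_of_nonneg_right hkey (Real.rpow_nonneg h1k.le q)
  have hL : (k/(k+1))^q * (1+k)^q = k^q := by
    rw [← Real.mul_rpow (by positivity) h1k.le]
    congr 1
    rw [show (1:ℝ)+k = k+1 by ring, div_mul_cancel₀ _ (by linarith : (k:ℝ)+1 ≠ 0)]
  have hR : (1 - q/(k+1)) * (1+k)^q = (1+k)^q - q * (1+k)^(q-1) := by
    rw [Real.rpow_sub h1k, Real.rpow_one]
    field_simp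
    ring
  rw [hL, hR] at hmul
  linarith

/-- tail estimate for one-dimensional sums -/
lemma E1 (t : ℝ) (ht : 1 < t) :
    ∀ m M : ℕ, ∑ n ∈ Finset.range M, ((1:ℝ)+m+n)^(-t)
      ≤ (1 + 1/(t-1)) * ((1:ℝ)+m)^(1-t) := by
  intro m M
  have h1m : (0:ℝ) < 1 + m := by positivity
  have ht1 : (0:ℝ) < t - 1 := by linarith
  have hK0 : (0:ℝ) ≤ 1/(t-1) := div_nonneg zero_le_one ht1.le
  cases M with
  | zero =>
    simp only [Finset.range_zero, Finset.sum_empty]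
    have h1 : (0:ℝ) ≤ ((1:ℝ)+m)^(1-t) := Real.rpow_nonneg (by linarith) _
    nlinarith [hK0]
  | succ M =>
    rw [Finset.sum_range_succ']
    have term0 : ((1:ℝ)+m+0)^(-t) ≤ ((1:ℝ)+m)^(1-t) := by
      rw [add_zero]
      apply Real.rpow_le_rpow_of_exponent_le (by linarith [Nat.cast_nonneg (α := ℝ) m])
      linarith
    have tail : ∑ n ∈ Finset.range M, ((1:ℝ)+m+(n+1))^(-t)
        ≤ (1/(t-1)) * ((1:ℝ)+m)^(1-t) := by
      have hterm : ∀ n : ℕ, ((1:ℝ)+m+((n:ℝ)+1))^(-t)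
          ≤ (1/(t-1)) * (((m:ℝ)+1+n)^(1-t) - ((1:ℝ)+m+((n:ℝ)+1))^(1-t)) := by
        intro n
        have hu : (1:ℝ) ≤ (m:ℝ)+1+n := by
          have : (0:ℝ) ≤ (m:ℝ) := Nat.cast_nonneg m
          have : (0:ℝ) ≤ (n:ℝ) := Nat.cast_nonneg n
          linarith [Nat.cast_nonneg (α := ℝ) m]
        have hA := ineqA ht hu
        have he : (1:ℝ) + ((m:ℝ)+1+n) = (1:ℝ)+m+((n:ℝ)+1) := by ring
        rw [he] at hA
        calc ((1:ℝ)+m+((n:ℝ)+1))^(-t)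
            = (1/(t-1)) * ((t-1) * ((1:ℝ)+m+((n:ℝ)+1))^(-t)) := by
              field_simp
          _ ≤ (1/(t-1)) * (((m:ℝ)+1+n)^(1-t) - ((1:ℝ)+m+((n:ℝ)+1))^(1-t)) :=
              mul_le_mul_of_nonneg_left hA (by positivity)
      calc ∑ n ∈ Finset.range M, ((1:ℝ)+m+(n+1))^(-t)
          ≤ ∑ n ∈ Finset.range M,
              (1/(t-1)) * (((m:ℝ)+1+n)^(1-t) - ((1:ℝ)+m+((n:ℝ)+1))^(1-t)) :=
            Finset.sum_le_sum fun n _ => hterm n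
        _ = (1/(t-1)) * ∑ n ∈ Finset.range M,
              ((fun k : ℕ => ((m:ℝ)+1+k)^(1-t)) n - (fun k : ℕ => ((m:ℝ)+1+k)^(1-t)) (n+1)) := by
            rw [Finset.mul_sum]
            refine Finset.sum_congr rfl fun n _ => ?_
            push_cast
            ring_nf
        _ = (1/(t-1)) * (((m:ℝ)+1+0)^(1-t) - ((m:ℝ)+1+M)^(1-t)) := by
            rw [Finset.sum_range_sub' (fun k : ℕ => ((m:ℝ)+1+k)^(1-t)) M]
            push_cast
            ring_nf
        _ ≤ (1/(t-1)) * ((1:ℝ)+m)^(1-t) := by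
            have hpos : (0:ℝ) ≤ ((m:ℝ)+1+M)^(1-t) := by positivity
            have he : ((m:ℝ)+1+0) = (1:ℝ)+m := by ring
            rw [he]
            have : ((1:ℝ)+m)^(1-t) - ((m:ℝ)+1+M)^(1-t) ≤ ((1:ℝ)+m)^(1-t) := by linarith
            apply mul_le_mul_of_nonneg_left this hK0
    have hsum : ∑ n ∈ Finset.range M, ((1:ℝ)+m+(↑(n+1)))^(-t)
        = ∑ n ∈ Finset.range M, ((1:ℝ)+m+((n:ℝ)+1))^(-t) := by
      refine Finset.sum_congr rfl fun n _ => ?_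
      push_cast
      ring_nf
    rw [hsum]
    push_cast
    linarith [term0, tail]

/-- growth estimate for one-dimensional partial sums -/
lemma E2 (t : ℝ) (ht : t < 1) :
    ∃ K : ℝ, 0 < K ∧ ∀ m : ℕ, ∑ k ∈ Finset.range (m+1), ((1:ℝ)+k)^(-t)
      ≤ K * ((1:ℝ)+m)^(1-t) := by
  rcases le_or_gt t 0 with ht0 | ht0
  · refine ⟨1, one_pos, fun m => ?_⟩
    rw [one_mul]
    have h1m : (1:ℝ) ≤ 1 + m := by linarith [Nat.cast_nonneg (α := ℝ) m]
    calc ∑ k ∈ Finset.range (m+1), ((1:ℝ)+k)^(-t)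
        ≤ ∑ _k ∈ Finset.range (m+1), ((1:ℝ)+m)^(-t) := by
          refine Finset.sum_le_sum fun k hk => ?_
          rw [Finset.mem_range] at hk
          apply Real.rpow_le_rpow (by positivity) _ (by linarith)
          have : (k:ℝ) ≤ m := by exact_mod_cast Nat.lt_succ_iff.mp hk
          linarith
      _ = ((m:ℝ)+1) * ((1:ℝ)+m)^(-t) := by
          rw [Finset.sum_const, Finset.card_range, nsmul_eq_mul]
          push_cast; ring
      _ = ((1:ℝ)+m)^(1-t) := by
          rw [show (1:ℝ)-t = 1 + (-t) by ring, Real.rpow_add (by linarith), Real.rpow_one]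
          ring
  · set q : ℝ := 1 - t with hqdef
    have hq0 : 0 < q := by rw [hqdef]; linarith
    have hq1 : q ≤ 1 := by rw [hqdef]; linarith
    refine ⟨1/q, by positivity, fun m => ?_⟩
    have hterm : ∀ k : ℕ, ((1:ℝ)+k)^(-t)
        ≤ (1/q) * (((k:ℝ)+1)^q - ((k:ℝ))^q) := by
      intro k
      have hB := ineqB hq0 hq1 (Nat.cast_nonneg (α := ℝ) k)
      have he : q - 1 = -t := by rw [hqdef]; ring
      rw [he] at hB
      have he2 : (1:ℝ) + (k:ℝ) = (k:ℝ) + 1 := by ring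
      rw [he2]
      rw [he2] at hB
      have : ((k:ℝ)+1)^(-t) ≤ (1/q) * (q * ((k:ℝ)+1)^(-t)) := by
        rw [one_div, inv_mul_cancel_left₀ hq0.ne']
      calc ((k:ℝ)+1)^(-t) = (1/q) * (q * ((k:ℝ)+1)^(-t)) := by
            rw [one_div, inv_mul_cancel_left₀ hq0.ne']
        _ ≤ (1/q) * (((k:ℝ)+1)^q - ((k:ℝ))^q) := by
            apply mul_le_mul_of_nonneg_left hB (by positivity)
    calc ∑ k ∈ Finset.range (m+1), ((1:ℝ)+k)^(-t)
        ≤ ∑ k ∈ Finset.range (m+1), (1/q) * (((k:ℝ)+1)^q - ((k:ℝ))^q) :=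
          Finset.sum_le_sum fun k _ => hterm k
      _ = (1/q) * ∑ k ∈ Finset.range (m+1),
            ((fun j : ℕ => ((j:ℝ))^q) (k+1) - (fun j : ℕ => ((j:ℝ))^q) k) := by
          rw [Finset.mul_sum]
          refine Finset.sum_congr rfl fun k _ => ?_
          push_cast
          ring_nf
      _ = (1/q) * (((m+1:ℕ):ℝ)^q - ((0:ℕ):ℝ)^q) := by
          rw [Finset.sum_range_sub (fun j : ℕ => ((j:ℝ))^q) (m+1)]
      _ = (1/q) * ((1:ℝ)+m)^(1-t) := by
          rw [Nat.cast_zero, Real.zero_rpow hq0.ne']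
          push_cast
          rw [hqdef]
          ring_nf
      _ ≤ (1/q) * ((1:ℝ)+m)^(1-t) := le_refl _

end ConvAux
namespace ConvAux

variable {d : ℕ}

lemma sum_box (m : ℕ) (h : ℕ → ℝ) :
    ∑ y ∈ box d m, h (Nn y) = ∑ k ∈ Finset.range (m+1), (scard d k : ℝ) * h k := by
  induction m with
  | zero =>
    have h0 : ∀ y ∈ box d 0, h (Nn y) = h 0 := fun y hy => by
      rw [Nat.le_zero.mp (mem_box.mp hy)]
    rw [Finset.sum_congr rfl h0, Finset.sum_const, card_box, nsmul_eq_mul]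
    simp [scard_zero]
  | succ m ih =>
    have hsub : box d m ⊆ box d (m+1) := box_mono (Nat.le_succ m)
    rw [← Finset.sum_sdiff hsub, ih]
    have hsd : ∑ y ∈ box d (m+1) \ box d m, h (Nn y) = (scard d (m+1) : ℝ) * h (m+1) := by
      rw [← filter_box_eq_sdiff]
      have : ∀ y ∈ (box d (m+1)).filter fun y => Nn y = m+1, h (Nn y) = h (m+1) := by
        intro y hy
        rw [(Finset.mem_filter.mp hy).2]
      rw [Finset.sum_congr rfl this, Finset.sum_const, nsmul_eq_mul, scard]
    rw [hsd, Finset.sum_range_succ _ (m+1)]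
    exact add_comm _ _

lemma pow_mul_rpow (hd : 1 ≤ d) {u : ℝ} (hu : 1 ≤ u) (s : ℝ) :
    u ^ (d-1) * u ^ (-s) = u ^ (((d:ℝ) - 1) - s) := by
  rw [← Real.rpow_natCast u (d-1), ← Real.rpow_add (by linarith)]
  congr 1
  rw [Nat.cast_sub hd]
  push_cast
  ring

lemma scard_term_le (hd : 1 ≤ d) {s : ℝ} (k : ℕ) :
    (scard d k : ℝ) * ((1:ℝ) + k) ^ (-s)
      ≤ (d:ℝ) * 2^d * ((1:ℝ)+k) ^ (-(s - (d:ℝ) + 1)) := by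
  have h1k : (1:ℝ) ≤ 1 + k := by linarith [Nat.cast_nonneg (α := ℝ) k]
  have hpos : (0:ℝ) ≤ ((1:ℝ)+k) ^ (-s) := Real.rpow_nonneg (by linarith) _
  calc (scard d k : ℝ) * ((1:ℝ) + k) ^ (-s)
      ≤ ((d:ℝ) * 2^d * ((1:ℝ)+k) ^ (d-1)) * ((1:ℝ)+k) ^ (-s) :=
        mul_le_mul_of_nonneg_right (scard_le hd k) hpos
    _ = (d:ℝ) * 2^d * (((1:ℝ)+k) ^ (d-1) * ((1:ℝ)+k) ^ (-s)) := by ring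
    _ = (d:ℝ) * 2^d * ((1:ℝ)+k) ^ (-(s - (d:ℝ) + 1)) := by
        rw [pow_mul_rpow hd h1k s]
        congr 2
        ring

/-- lattice ball sum estimate -/
lemma lat_ball (hd : 1 ≤ d) {s : ℝ} (hsd : s < d) :
    ∃ K : ℝ, 0 < K ∧ ∀ m : ℕ,
      (∑' y : Vtx d, if Nn y ≤ m then ENNReal.ofReal (((1:ℝ) + (Nn y : ℝ)) ^ (-s)) else 0)
        ≤ ENNReal.ofReal (K * ((1:ℝ)+m) ^ ((d:ℝ) - s)) := by
  set t : ℝ := s - (d:ℝ) + 1 with htdef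
  have ht : t < 1 := by rw [htdef]; linarith
  obtain ⟨K₂, hK₂, hE2⟩ := E2 t ht
  refine ⟨(d:ℝ) * 2^d * K₂, by positivity, fun m => ?_⟩
  have hsupp : ∀ y : Vtx d, y ∉ box d m →
      (if Nn y ≤ m then ENNReal.ofReal (((1:ℝ) + (Nn y : ℝ)) ^ (-s)) else 0) = 0 := by
    intro y hy
    rw [if_neg (fun h => hy (mem_box.mpr h))]
  rw [tsum_eq_sum hsupp]
  have hcongr : ∀ y ∈ box d m,
      (if Nn y ≤ m then ENNReal.ofReal (((1:ℝ) + (Nn y : ℝ)) ^ (-s)) else 0)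
        = ENNReal.ofReal (((1:ℝ) + (Nn y : ℝ)) ^ (-s)) := by
    intro y hy
    rw [if_pos (mem_box.mp hy)]
  rw [Finset.sum_congr rfl hcongr, ← ENNReal.ofReal_sum_of_nonneg
    (fun y _ => Real.rpow_nonneg (by positivity) _)]
  apply ENNReal.ofReal_le_ofReal
  calc ∑ y ∈ box d m, ((1:ℝ) + (Nn y : ℝ)) ^ (-s)
      = ∑ k ∈ Finset.range (m+1), (scard d k : ℝ) * ((1:ℝ)+k) ^ (-s) :=
        sum_box m (fun k => ((1:ℝ)+(k:ℝ)) ^ (-s))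
    _ ≤ ∑ k ∈ Finset.range (m+1), (d:ℝ) * 2^d * ((1:ℝ)+k) ^ (-t) :=
        Finset.sum_le_sum fun k _ => scard_term_le hd k
    _ = (d:ℝ) * 2^d * ∑ k ∈ Finset.range (m+1), ((1:ℝ)+k) ^ (-t) := by
        rw [Finset.mul_sum]
    _ ≤ (d:ℝ) * 2^d * (K₂ * ((1:ℝ)+m) ^ (1-t)) := by
        apply mul_le_mul_of_nonneg_left (hE2 m) (by positivity)
    _ = (d:ℝ) * 2^d * K₂ * ((1:ℝ)+m) ^ ((d:ℝ)-s) := by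
        rw [show (1:ℝ) - t = (d:ℝ) - s by rw [htdef]; ring]
        ring

/-- lattice tail sum estimate -/
lemma lat_tail (hd : 1 ≤ d) {s : ℝ} (hsd : (d:ℝ) < s) :
    ∃ K : ℝ, 0 < K ∧ ∀ m : ℕ,
      (∑' y : Vtx d, if m ≤ Nn y then ENNReal.ofReal (((1:ℝ) + (Nn y : ℝ)) ^ (-s)) else 0)
        ≤ ENNReal.ofReal (K * ((1:ℝ)+m) ^ ((d:ℝ) - s)) := by
  set t : ℝ := s - (d:ℝ) + 1 with htdef
  have ht : 1 < t := by rw [htdef]; linarith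
  have ht1 : (0:ℝ) < t - 1 := by linarith
  set K₁ : ℝ := 1 + 1/(t-1) with hK₁def
  have hK₁ : 0 < K₁ := by rw [hK₁def]; positivity
  refine ⟨(d:ℝ) * 2^d * K₁, by positivity, fun m => ?_⟩
  set G : ℕ → Vtx d → ℝ≥0∞ := fun n y =>
    if Nn y = m + n then ENNReal.ofReal (((1:ℝ) + ((m+n : ℕ) : ℝ)) ^ (-s)) else 0 with hGdef
  have hpt : ∀ y : Vtx d,
      (if m ≤ Nn y then ENNReal.ofReal (((1:ℝ) + (Nn y : ℝ)) ^ (-s)) else 0)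
        ≤ ∑' n : ℕ, G n y := by
    intro y
    by_cases h : m ≤ Nn y
    · rw [if_pos h]
      have hG : G (Nn y - m) y = ENNReal.ofReal (((1:ℝ) + (Nn y : ℝ)) ^ (-s)) := by
        rw [hGdef]
        simp only
        rw [if_pos (by omega : Nn y = m + (Nn y - m))]
        congr 2
        congr 1
        exact_mod_cast congrArg (Nat.cast (R := ℝ)) (by omega : m + (Nn y - m) = Nn y)
      rw [← hG]
      exact ENNReal.le_tsum (Nn y - m)
    · rw [if_neg h]
      exact bot_le
  calc (∑' y : Vtx d, if m ≤ Nn y then ENNReal.ofReal (((1:ℝ) + (Nn y : ℝ)) ^ (-s)) else 0)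
      ≤ ∑' y : Vtx d, ∑' n : ℕ, G n y := ENNReal.tsum_le_tsum hpt
    _ = ∑' n : ℕ, ∑' y : Vtx d, G n y := ENNReal.tsum_comm
    _ ≤ ENNReal.ofReal (((d:ℝ) * 2^d * K₁) * ((1:ℝ)+m) ^ ((d:ℝ)-s)) := by
        have hGsum : ∀ n : ℕ, (∑' y : Vtx d, G n y)
            ≤ ENNReal.ofReal ((scard d (m+n) : ℝ) * ((1:ℝ) + ((m+n:ℕ):ℝ)) ^ (-s)) := by
          intro n
          have hsupp : ∀ y : Vtx d, y ∉ box d (m+n) → G n y = 0 := by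
            intro y hy
            rw [hGdef]
            simp only
            rw [if_neg (fun h => hy (mem_box.mpr (le_of_eq h)))]
          rw [tsum_eq_sum hsupp, hGdef]
          simp only
          rw [← Finset.sum_filter]
          rw [Finset.sum_const, nsmul_eq_mul]
          rw [← scard]
          rw [← ENNReal.ofReal_natCast (scard d (m+n)),
            ← ENNReal.ofReal_mul (by positivity)]
        calc ∑' n : ℕ, ∑' y : Vtx d, G n y
            ≤ ∑' n : ℕ, ENNReal.ofReal ((scard d (m+n) : ℝ) * ((1:ℝ) + ((m+n:ℕ):ℝ)) ^ (-s)) :=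
              ENNReal.tsum_le_tsum hGsum
          _ ≤ ENNReal.ofReal (((d:ℝ) * 2^d * K₁) * ((1:ℝ)+m) ^ ((d:ℝ)-s)) := by
              apply ENNReal.tsum_le_of_sum_range_le
              intro M
              rw [← ENNReal.ofReal_sum_of_nonneg (fun n _ => by positivity)]
              apply ENNReal.ofReal_le_ofReal
              calc ∑ n ∈ Finset.range M, (scard d (m+n) : ℝ) * ((1:ℝ) + ((m+n:ℕ):ℝ)) ^ (-s)
                  ≤ ∑ n ∈ Finset.range M, (d:ℝ) * 2^d * ((1:ℝ)+(m:ℝ)+(n:ℝ)) ^ (-t) := by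
                    refine Finset.sum_le_sum fun n _ => ?_
                    have := scard_term_le hd (s := s) (m+n)
                    rw [htdef]
                    have hcast : ((1:ℝ) + ((m+n:ℕ):ℝ)) = (1:ℝ)+(m:ℝ)+(n:ℝ) := by
                      push_cast; ring
                    rw [← hcast]
                    exact this
                _ = (d:ℝ) * 2^d * ∑ n ∈ Finset.range M, ((1:ℝ)+(m:ℝ)+(n:ℝ)) ^ (-t) := by
                    rw [Finset.mul_sum]
                _ ≤ (d:ℝ) * 2^d * (K₁ * ((1:ℝ)+m) ^ (1-t)) := by
                    apply mul_le_mul_of_nonneg_left _ (by positivity)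
                    rw [hK₁def]
                    exact E1 t ht m M
                _ = (d:ℝ) * 2^d * K₁ * ((1:ℝ)+m) ^ ((d:ℝ)-s) := by
                    rw [show (1:ℝ) - t = (d:ℝ) - s by rw [htdef]; ring]
                    ring

end ConvAux
namespace ConvAux

/-- antitonicity of `(1+·)^(-s)` -/
lemma anti {s u v : ℝ} (hs : 0 ≤ s) (hu : 0 ≤ u) (huv : u ≤ v) :
    (1+v) ^ (-s) ≤ (1+u) ^ (-s) :=
  Real.rpow_le_rpow_of_nonpos (by linarith) (by linarith) (by linarith)

/-- doubling bound -/
lemma half {b R w : ℝ} (hb : 0 < b) (hR : 0 ≤ R) (hw : 0 ≤ w) (h : R ≤ 2*w) :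
    (1+w) ^ (-b) ≤ 2^b * (1+R) ^ (-b) := by
  have h1R : (0:ℝ) < 1 + R := by linarith
  have h1 : (1+R)/2 ≤ 1+w := by linarith
  have h2 : (1+w)^(-b) ≤ ((1+R)/2)^(-b) :=
    Real.rpow_le_rpow_of_nonpos (by linarith) h1 (by linarith)
  have h3 : ((1+R)/2)^(-b) = 2^b * (1+R)^(-b) := by
    rw [Real.div_rpow h1R.le (by norm_num), Real.rpow_neg (by norm_num : (0:ℝ) ≤ 2)]
    rw [div_inv_eq_mul]
    ring
  rw [h3] at h2
  exact h2

/-- merging exponents -/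
lemma rpow_merge {u : ℝ} (hu : 0 < u) (p q : ℝ) : u ^ p * u ^ q = u ^ (p+q) :=
  (Real.rpow_add hu p q).symm

/-- pointwise bound for case (i) -/
lemma ptI {a b r s R NA NB : ℝ} (hb : 0 < b) (hab : b ≤ a) (hr : 0 ≤ r) (hs : 0 ≤ s)
    (hR : 0 ≤ R) (htri : R ≤ r + s) (hNA : NA ≤ r) (hNB : NB ≤ s)
    (hNA0 : 0 ≤ NA) (hNB0 : 0 ≤ NB) :
    (1+r) ^ (-a) * (1+s) ^ (-b)
      ≤ 2^b * (1+R) ^ (-b) * ((1+NA) ^ (-a) + (1+NB) ^ (-a)) := by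
  have ha : 0 < a := lt_of_lt_of_le hb hab
  have hpos1 : (0:ℝ) ≤ (1+NA)^(-a) := Real.rpow_nonneg (by linarith) _
  have hpos2 : (0:ℝ) ≤ (1+NB)^(-a) := Real.rpow_nonneg (by linarith) _
  have h2b : (0:ℝ) ≤ 2^b * (1+R)^(-b) := by positivity
  rcases le_or_gt r s with hcase | hcase
  · -- r ≤ s : use NA term
    have hs2 : R ≤ 2*s := by linarith
    have hg : (1+s)^(-b) ≤ 2^b * (1+R)^(-b) := half hb hR hs hs2
    have hf : (1+r)^(-a) ≤ (1+NA)^(-a) := anti ha.le hNA0 hNA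
    calc (1+r) ^ (-a) * (1+s) ^ (-b)
        ≤ (1+NA)^(-a) * (2^b * (1+R)^(-b)) :=
          mul_le_mul hf hg (Real.rpow_nonneg (by linarith) _) hpos1
      _ ≤ 2^b * (1+R) ^ (-b) * ((1+NA) ^ (-a) + (1+NB) ^ (-a)) := by nlinarith
  · -- s < r : use NB term
    have hr2 : R ≤ 2*r := by linarith
    have hg : (1+r)^(-b) ≤ 2^b * (1+R)^(-b) := half hb hR hr hr2
    have hsplit : (1+r)^(-a) = (1+r)^(-b) * (1+r)^(-(a-b)) := by
      rw [rpow_merge (by linarith) (-b) (-(a-b))]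
      congr 1
      ring
    have hmid : (1+r)^(-(a-b)) ≤ (1+s)^(-(a-b)) := anti (by linarith) hs hcase.le
    have hmerge : (1+s)^(-(a-b)) * (1+s)^(-b) = (1+s)^(-a) := by
      rw [rpow_merge (by linarith) (-(a-b)) (-b)]
      congr 1
      ring
    have hlast : (1+s)^(-a) ≤ (1+NB)^(-a) := anti ha.le hNB0 hNB
    have hsb : (0:ℝ) ≤ (1+s)^(-b) := Real.rpow_nonneg (by linarith) _
    have hsab : (0:ℝ) ≤ (1+s)^(-(a-b)) := Real.rpow_nonneg (by linarith) _
    have hrab : (0:ℝ) ≤ (1+r)^(-(a-b)) := Real.rpow_nonneg (by linarith) _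
    calc (1+r) ^ (-a) * (1+s) ^ (-b)
        = (1+r)^(-b) * ((1+r)^(-(a-b)) * (1+s)^(-b)) := by rw [hsplit]; ring
      _ ≤ (2^b * (1+R)^(-b)) * ((1+s)^(-(a-b)) * (1+s)^(-b)) := by
          apply mul_le_mul hg _ (by positivity) h2b
          exact mul_le_mul_of_nonneg_right hmid hsb
      _ = (2^b * (1+R)^(-b)) * (1+s)^(-a) := by rw [hmerge]
      _ ≤ (2^b * (1+R)^(-b)) * (1+NB)^(-a) := mul_le_mul_of_nonneg_left hlast h2b
      _ ≤ 2^b * (1+R) ^ (-b) * ((1+NA) ^ (-a) + (1+NB) ^ (-a)) := by nlinarith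

end ConvAux
namespace ConvAux

variable {d : ℕ}

/-- pointwise bound for case (ii) -/
lemma ptII (hd : 1 ≤ d) {a b : ℝ} (hb : 0 < b) (hab : b ≤ a)
    (x y : Vtx d) (m₁ m₂ : ℕ)
    (hm₁ : znorm x / 2 ≤ (m₁:ℝ)) (hm₂ : (m₂:ℝ) ≤ znorm x / (2*(d:ℝ))) :
    ENNReal.ofReal ((1 + znorm y) ^ (-a) * (1 + znorm (x-y)) ^ (-b)) ≤
      (if Nn y ≤ m₁ then
        ENNReal.ofReal (2^b * (1 + znorm x) ^ (-b) * (1+(Nn y:ℝ)) ^ (-a)) else 0)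
      + (if Nn (x-y) ≤ m₁ then
        ENNReal.ofReal (2^a * (1 + znorm x) ^ (-a) * (1+(Nn (x-y):ℝ)) ^ (-b)) else 0)
      + (if m₂ ≤ Nn y then ENNReal.ofReal ((1+(Nn y:ℝ)) ^ (-(a+b))) else 0)
      + (if m₂ ≤ Nn (x-y) then ENNReal.ofReal ((1+(Nn (x-y):ℝ)) ^ (-(a+b))) else 0) := by
  have ha : 0 < a := lt_of_lt_of_le hb hab
  have hd1 : (1:ℝ) ≤ (d:ℝ) := by exact_mod_cast hd
  set r := znorm y with hrdef
  set s := znorm (x-y) with hsdef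
  set R := znorm x with hRdef
  have hr : 0 ≤ r := znorm_nonneg y
  have hs : 0 ≤ s := znorm_nonneg (x-y)
  have hR : 0 ≤ R := znorm_nonneg x
  have htri : R ≤ r + s := znorm_triangle x y
  have hNA : (Nn y : ℝ) ≤ r := Nn_le_znorm hd y
  have hNB : (Nn (x-y) : ℝ) ≤ s := Nn_le_znorm hd (x-y)
  have hNAd : r ≤ (d:ℝ) * Nn y := znorm_le_d_Nn y
  have hNBd : s ≤ (d:ℝ) * Nn (x-y) := znorm_le_d_Nn (x-y)
  have hNA0 : (0:ℝ) ≤ (Nn y : ℝ) := Nat.cast_nonneg _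
  have hNB0 : (0:ℝ) ≤ (Nn (x-y) : ℝ) := Nat.cast_nonneg _
  rcases le_or_gt r (R/2) with hc1 | hc1
  · -- region 1 : |y| ≤ |x|/2
    have hcond : Nn y ≤ m₁ := by
      have : (Nn y : ℝ) ≤ (m₁:ℝ) := le_trans hNA (le_trans hc1 hm₁)
      exact_mod_cast this
    have hbound : (1+r)^(-a) * (1+s)^(-b)
        ≤ 2^b * (1+R)^(-b) * (1+(Nn y:ℝ))^(-a) := by
      have hs2 : R ≤ 2*s := by linarith
      have hg : (1+s)^(-b) ≤ 2^b * (1+R)^(-b) := half hb hR hs hs2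
      have hf : (1+r)^(-a) ≤ (1+(Nn y:ℝ))^(-a) := anti ha.le hNA0 hNA
      calc (1+r)^(-a) * (1+s)^(-b)
          ≤ (1+(Nn y:ℝ))^(-a) * (2^b * (1+R)^(-b)) :=
            mul_le_mul hf hg (Real.rpow_nonneg (by linarith) _)
              (Real.rpow_nonneg (by linarith) _)
        _ = 2^b * (1+R)^(-b) * (1+(Nn y:ℝ))^(-a) := by ring
    refine le_trans ?_ (le_trans le_self_add le_self_add)
    refine le_trans ?_ le_self_add
    rw [if_pos hcond]
    exact ENNReal.ofReal_le_ofReal hbound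
  rcases le_or_gt s (R/2) with hc2 | hc2
  · -- region 2 : |x-y| ≤ |x|/2
    have hcond : Nn (x-y) ≤ m₁ := by
      have : (Nn (x-y) : ℝ) ≤ (m₁:ℝ) := le_trans hNB (le_trans hc2 hm₁)
      exact_mod_cast this
    have hbound : (1+r)^(-a) * (1+s)^(-b)
        ≤ 2^a * (1+R)^(-a) * (1+(Nn (x-y):ℝ))^(-b) := by
      have hr2 : R ≤ 2*r := by linarith
      have hf : (1+r)^(-a) ≤ 2^a * (1+R)^(-a) := half ha hR hr hr2
      have hg : (1+s)^(-b) ≤ (1+(Nn (x-y):ℝ))^(-b) := anti hb.le hNB0 hNB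
      calc (1+r)^(-a) * (1+s)^(-b)
          ≤ (2^a * (1+R)^(-a)) * ((1+(Nn (x-y):ℝ))^(-b)) :=
            mul_le_mul hf hg (Real.rpow_nonneg (by linarith) _) (by positivity)
        _ = 2^a * (1+R)^(-a) * (1+(Nn (x-y):ℝ))^(-b) := by ring
    refine le_trans ?_ (le_trans le_self_add le_self_add)
    refine le_trans ?_ le_add_self
    rw [if_pos hcond]
    exact ENNReal.ofReal_le_ofReal hbound
  rcases le_or_gt r s with hc3 | hc3
  · -- region 3 : both large, r ≤ s
    have hcond : m₂ ≤ Nn y := by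
      have h1 : (m₂:ℝ) < (Nn y : ℝ) := by
        have hlt : R/2 < (d:ℝ) * Nn y := lt_of_lt_of_le hc1 hNAd
        have h2d : (0:ℝ) < 2*(d:ℝ) := by linarith
        have : R/(2*(d:ℝ)) < (Nn y : ℝ) := by
          rw [div_lt_iff₀ h2d]
          nlinarith
        linarith [hm₂]
      exact_mod_cast h1.le
    have hbound : (1+r)^(-a) * (1+s)^(-b) ≤ (1+(Nn y:ℝ))^(-(a+b)) := by
      have hg : (1+s)^(-b) ≤ (1+r)^(-b) := anti hb.le hr hc3
      calc (1+r)^(-a) * (1+s)^(-b)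
          ≤ (1+r)^(-a) * (1+r)^(-b) :=
            mul_le_mul_of_nonneg_left hg (Real.rpow_nonneg (by linarith) _)
        _ = (1+r)^(-(a+b)) := by rw [rpow_merge (by linarith)]; congr 1; ring
        _ ≤ (1+(Nn y:ℝ))^(-(a+b)) := anti (by linarith) hNA0 hNA
    refine le_trans ?_ le_self_add
    refine le_trans ?_ le_add_self
    rw [if_pos hcond]
    exact ENNReal.ofReal_le_ofReal hbound
  · -- region 4 : both large, s < r
    have hcond : m₂ ≤ Nn (x-y) := by
      have h1 : (m₂:ℝ) < (Nn (x-y) : ℝ) := by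
        have hlt : R/2 < (d:ℝ) * Nn (x-y) := lt_of_lt_of_le hc2 hNBd
        have h2d : (0:ℝ) < 2*(d:ℝ) := by linarith
        have : R/(2*(d:ℝ)) < (Nn (x-y) : ℝ) := by
          rw [div_lt_iff₀ h2d]
          nlinarith
        linarith [hm₂]
      exact_mod_cast h1.le
    have hbound : (1+r)^(-a) * (1+s)^(-b) ≤ (1+(Nn (x-y):ℝ))^(-(a+b)) := by
      have hf : (1+r)^(-a) ≤ (1+s)^(-a) := anti ha.le hs hc3.le
      calc (1+r)^(-a) * (1+s)^(-b)
          ≤ (1+s)^(-a) * (1+s)^(-b) :=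
            mul_le_mul_of_nonneg_right hf (Real.rpow_nonneg (by linarith) _)
        _ = (1+s)^(-(a+b)) := by rw [rpow_merge (by linarith)]; congr 1; ring
        _ ≤ (1+(Nn (x-y):ℝ))^(-(a+b)) := anti (by linarith) hNB0 hNB
    refine le_trans ?_ le_add_self
    rw [if_pos hcond]
    exact ENNReal.ofReal_le_ofReal hbound

end ConvAux
namespace ConvAux

lemma ite_ofReal_mul {c : ℝ} (hc : 0 ≤ c) (P : Prop) [Decidable P] (z : ℝ) :
    (if P then ENNReal.ofReal (c * z) else 0)
      = ENNReal.ofReal c * (if P then ENNReal.ofReal z else 0) := by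
  split_ifs with h
  · exact ENNReal.ofReal_mul hc
  · simp

lemma reindex (x : Vtx (dd : ℕ)) (F : Vtx dd → ℝ≥0∞) :
    (∑' y : Vtx dd, F (x - y)) = ∑' z : Vtx dd, F z := by
  simpa using (Equiv.subLeft x).tsum_eq F

end ConvAux

open ConvAux

theorem convolution_bounds
    (d : ℕ) (hd : 1 ≤ d) (a b : ℝ) (hb : 0 < b) (hab : b ≤ a)
    (c₁ c₂ : ℝ) (hc₁ : 0 < c₁) (hc₂ : 0 < c₂) :
    ∃ c₃ : ℝ, 0 < c₃ ∧
      ∀ f g : Vtx d → ℝ,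
        (∀ x : Vtx d, 0 ≤ f x ∧ f x ≤ c₁ * (1 + znorm x) ^ (-a)) →
        (∀ x : Vtx d, 0 ≤ g x ∧ g x ≤ c₂ * (1 + znorm x) ^ (-b)) →
        ∀ x : Vtx d,
          ((d : ℝ) < a →
            (∑' y : Vtx d, ENNReal.ofReal (f y * g (x - y))) ≤
              ENNReal.ofReal (c₃ * (1 + znorm x) ^ (-b))) ∧
          (a < (d : ℝ) → (d : ℝ) < a + b →
            (∑' y : Vtx d, ENNReal.ofReal (f y * g (x - y))) ≤
              ENNReal.ofReal (c₃ * (1 + znorm x) ^ ((d : ℝ) - (a + b)))) := by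
  have hd1 : (1:ℝ) ≤ (d:ℝ) := by exact_mod_cast hd
  have ha : 0 < a := lt_of_lt_of_le hb hab
  -- a generic product bound
  have hprod : ∀ (f g : Vtx d → ℝ),
      (∀ x : Vtx d, 0 ≤ f x ∧ f x ≤ c₁ * (1 + znorm x) ^ (-a)) →
      (∀ x : Vtx d, 0 ≤ g x ∧ g x ≤ c₂ * (1 + znorm x) ^ (-b)) →
      ∀ x y : Vtx d, f y * g (x - y)
        ≤ c₁ * c₂ * ((1 + znorm y) ^ (-a) * (1 + znorm (x-y)) ^ (-b)) := by
    intro f g hf hg x y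
    have h1 := hf y
    have h2 := hg (x - y)
    calc f y * g (x-y) ≤ (c₁ * (1 + znorm y) ^ (-a)) * (c₂ * (1 + znorm (x-y)) ^ (-b)) := by
          apply mul_le_mul h1.2 h2.2 h2.1
          exact mul_nonneg hc₁.le (Real.rpow_nonneg (by linarith [znorm_nonneg y]) _)
      _ = c₁ * c₂ * ((1 + znorm y) ^ (-a) * (1 + znorm (x-y)) ^ (-b)) := by ring
  by_cases hcase1 : (d:ℝ) < a
  · -- case (i) active
    obtain ⟨K, hK, hlt⟩ := ConvAux.lat_tail hd (s := a) hcase1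
    refine ⟨c₁ * c₂ * 2^b * (2*K), by positivity, ?_⟩
    intro f g hf hg x
    refine ⟨fun _ => ?_, fun h1 _ => absurd h1 (by linarith)⟩
    set R := znorm x with hRdef
    have hR : 0 ≤ R := znorm_nonneg x
    have h1R : (0:ℝ) < 1 + R := by linarith
    have hS : (∑' y : Vtx d, ENNReal.ofReal ((1 + (Nn y : ℝ)) ^ (-a)))
        ≤ ENNReal.ofReal K := by
      simpa using hlt 0
    have hS2 : (∑' y : Vtx d, ENNReal.ofReal ((1 + (Nn (x - y) : ℝ)) ^ (-a)))
        ≤ ENNReal.ofReal K := by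
      rw [reindex x (fun z => ENNReal.ofReal ((1 + (Nn z : ℝ)) ^ (-a)))]
      exact hS
    have hpt : ∀ y : Vtx d, ENNReal.ofReal (f y * g (x - y))
        ≤ ENNReal.ofReal (c₁ * c₂ * (2^b * (1+R) ^ (-b))) *
            (ENNReal.ofReal ((1 + (Nn y : ℝ)) ^ (-a))
              + ENNReal.ofReal ((1 + (Nn (x - y) : ℝ)) ^ (-a))) := by
      intro y
      have hI := ptI (a := a) (b := b) hb hab (znorm_nonneg y) (znorm_nonneg (x-y)) hR
        (znorm_triangle x y) (Nn_le_znorm hd y) (Nn_le_znorm hd (x-y))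
        (Nat.cast_nonneg _) (Nat.cast_nonneg _)
      calc ENNReal.ofReal (f y * g (x - y))
          ≤ ENNReal.ofReal (c₁ * c₂ *
              (2^b * (1+R)^(-b) * ((1 + (Nn y:ℝ))^(-a) + (1 + (Nn (x-y):ℝ))^(-a)))) := by
            apply ENNReal.ofReal_le_ofReal
            calc f y * g (x-y) ≤ c₁ * c₂ * ((1 + znorm y) ^ (-a) * (1 + znorm (x-y)) ^ (-b)) :=
                  hprod f g hf hg x y
              _ ≤ c₁ * c₂ *
                  (2^b * (1+R)^(-b) * ((1 + (Nn y:ℝ))^(-a) + (1 + (Nn (x-y):ℝ))^(-a))) := by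
                  apply mul_le_mul_of_nonneg_left hI (by positivity)
        _ = ENNReal.ofReal (c₁ * c₂ * (2^b * (1+R) ^ (-b))) *
            (ENNReal.ofReal ((1 + (Nn y : ℝ)) ^ (-a))
              + ENNReal.ofReal ((1 + (Nn (x - y) : ℝ)) ^ (-a))) := by
            rw [← ENNReal.ofReal_add (by positivity) (by positivity),
              ← ENNReal.ofReal_mul (by positivity)]
            congr 1
            ring
    calc (∑' y : Vtx d, ENNReal.ofReal (f y * g (x - y)))
        ≤ ∑' y : Vtx d, ENNReal.ofReal (c₁ * c₂ * (2^b * (1+R) ^ (-b))) *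
            (ENNReal.ofReal ((1 + (Nn y : ℝ)) ^ (-a))
              + ENNReal.ofReal ((1 + (Nn (x - y) : ℝ)) ^ (-a))) :=
          ENNReal.tsum_le_tsum hpt
      _ = ENNReal.ofReal (c₁ * c₂ * (2^b * (1+R) ^ (-b))) *
          ((∑' y : Vtx d, ENNReal.ofReal ((1 + (Nn y : ℝ)) ^ (-a)))
            + ∑' y : Vtx d, ENNReal.ofReal ((1 + (Nn (x - y) : ℝ)) ^ (-a))) := by
          rw [ENNReal.tsum_mul_left, ENNReal.tsum_add]
      _ ≤ ENNReal.ofReal (c₁ * c₂ * (2^b * (1+R) ^ (-b))) *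
          (ENNReal.ofReal K + ENNReal.ofReal K) := by
          apply mul_le_mul_right
          exact add_le_add hS hS2
      _ = ENNReal.ofReal (c₁ * c₂ * (2^b * (1+R) ^ (-b)) * (K + K)) := by
          rw [← ENNReal.ofReal_add hK.le hK.le, ← ENNReal.ofReal_mul (by positivity)]
      _ = ENNReal.ofReal (c₁ * c₂ * 2^b * (2*K) * (1 + R) ^ (-b)) := by
          congr 1
          ring
  · by_cases hcase2 : a < (d:ℝ) ∧ (d:ℝ) < a + b
    · -- case (ii) active
      obtain ⟨had, hdab⟩ := hcase2
      have hbd : b < (d:ℝ) := lt_of_le_of_lt hab had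
      obtain ⟨Ka, hKa, hballa⟩ := ConvAux.lat_ball hd (s := a) had
      obtain ⟨Kb, hKb, hballb⟩ := ConvAux.lat_ball hd (s := b) hbd
      obtain ⟨Kt, hKt, htail⟩ := ConvAux.lat_tail hd (s := a+b) hdab
      refine ⟨c₁ * c₂ * ((2^b * Ka * 2^((d:ℝ)-a)) + (2^a * Kb * 2^((d:ℝ)-b))
        + Kt * (4*(d:ℝ))^((a+b)-(d:ℝ)) + Kt * (4*(d:ℝ))^((a+b)-(d:ℝ))), by positivity, ?_⟩
      intro f g hf hg x
      refine ⟨fun h1 => absurd h1 hcase1, fun _ _ => ?_⟩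
      set R := znorm x with hRdef
      have hR : 0 ≤ R := znorm_nonneg x
      have h1R : (0:ℝ) < 1 + R := by linarith
      set m₁ : ℕ := ⌈R/2⌉₊ with hm₁def
      set m₂ : ℕ := ⌊R/(2*(d:ℝ))⌋₊ with hm₂def
      have hm₁ : R/2 ≤ (m₁:ℝ) := Nat.le_ceil _
      have hm₂ : (m₂:ℝ) ≤ R/(2*(d:ℝ)) := Nat.floor_le (by positivity)
      -- bounds on m₁, m₂ versus R
      have hm₁R : 1 + (m₁:ℝ) ≤ 2 * (1+R) := by
        have := Nat.ceil_lt_add_one (by positivity : (0:ℝ) ≤ R/2)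
        rw [← hm₁def] at this
        linarith
      have hm₂R : (1+R)/(4*(d:ℝ)) ≤ 1 + (m₂:ℝ) := by
        have hfl : R/(2*(d:ℝ)) - 1 < (m₂:ℝ) := by
          have := Nat.sub_one_lt_floor (R/(2*(d:ℝ)))
          rw [← hm₂def] at this
          exact this
        have h2d : (0:ℝ) < 2*(d:ℝ) := by linarith
        have hRlt : R < (1 + (m₂:ℝ)) * (2*(d:ℝ)) := by
          rw [← div_lt_iff₀ h2d]
          linarith
        rw [div_le_iff₀ (by positivity)]
        have hm₂0 : (0:ℝ) ≤ (m₂:ℝ) := Nat.cast_nonneg _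
        nlinarith
      -- the four tail/ball sums
      have hT1 : (∑' y : Vtx d, (if Nn y ≤ m₁ then
            ENNReal.ofReal (2^b * (1+R) ^ (-b) * (1+(Nn y:ℝ)) ^ (-a)) else 0))
          ≤ ENNReal.ofReal ((2^b * Ka * 2^((d:ℝ)-a)) * (1+R) ^ ((d:ℝ)-(a+b))) := by
        have heq : ∀ y : Vtx d, (if Nn y ≤ m₁ then
              ENNReal.ofReal (2^b * (1+R) ^ (-b) * (1+(Nn y:ℝ)) ^ (-a)) else 0)
            = ENNReal.ofReal (2^b * (1+R) ^ (-b)) *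
              (if Nn y ≤ m₁ then ENNReal.ofReal ((1+(Nn y:ℝ)) ^ (-a)) else 0) := fun y =>
          ite_ofReal_mul (by positivity) _ _
        rw [tsum_congr heq, ENNReal.tsum_mul_left]
        calc ENNReal.ofReal (2^b * (1+R) ^ (-b)) *
              (∑' y : Vtx d, if Nn y ≤ m₁ then ENNReal.ofReal ((1+(Nn y:ℝ)) ^ (-a)) else 0)
            ≤ ENNReal.ofReal (2^b * (1+R) ^ (-b)) *
              ENNReal.ofReal (Ka * ((1:ℝ)+m₁) ^ ((d:ℝ)-a)) := mul_le_mul_right (hballa m₁) _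
          _ = ENNReal.ofReal (2^b * (1+R) ^ (-b) * (Ka * ((1:ℝ)+m₁) ^ ((d:ℝ)-a))) :=
              (ENNReal.ofReal_mul (by positivity)).symm
          _ ≤ ENNReal.ofReal ((2^b * Ka * 2^((d:ℝ)-a)) * (1+R) ^ ((d:ℝ)-(a+b))) := by
              apply ENNReal.ofReal_le_ofReal
              have hmp : ((1:ℝ)+m₁) ^ ((d:ℝ)-a) ≤ 2^((d:ℝ)-a) * (1+R) ^ ((d:ℝ)-a) := by
                calc ((1:ℝ)+m₁) ^ ((d:ℝ)-a) ≤ (2*(1+R)) ^ ((d:ℝ)-a) :=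
                      Real.rpow_le_rpow (by positivity) hm₁R (by linarith)
                  _ = 2^((d:ℝ)-a) * (1+R) ^ ((d:ℝ)-a) :=
                      Real.mul_rpow (by norm_num) (by linarith)
              have hmerge : (1+R) ^ (-b) * (1+R) ^ ((d:ℝ)-a) = (1+R) ^ ((d:ℝ)-(a+b)) := by
                rw [rpow_merge h1R]
                congr 1
                ring
              calc 2^b * (1+R) ^ (-b) * (Ka * ((1:ℝ)+m₁) ^ ((d:ℝ)-a))
                  ≤ 2^b * (1+R) ^ (-b) * (Ka * (2^((d:ℝ)-a) * (1+R) ^ ((d:ℝ)-a))) := by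
                    apply mul_le_mul_of_nonneg_left _ (by positivity)
                    apply mul_le_mul_of_nonneg_left hmp hKa.le
                _ = (2^b * Ka * 2^((d:ℝ)-a)) * ((1+R) ^ (-b) * (1+R) ^ ((d:ℝ)-a)) := by ring
                _ = (2^b * Ka * 2^((d:ℝ)-a)) * (1+R) ^ ((d:ℝ)-(a+b)) := by rw [hmerge]
      have hT2 : (∑' y : Vtx d, (if Nn (x-y) ≤ m₁ then
            ENNReal.ofReal (2^a * (1+R) ^ (-a) * (1+(Nn (x-y):ℝ)) ^ (-b)) else 0))
          ≤ ENNReal.ofReal ((2^a * Kb * 2^((d:ℝ)-b)) * (1+R) ^ ((d:ℝ)-(a+b))) := by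
        rw [reindex x (fun z => if Nn z ≤ m₁ then
          ENNReal.ofReal (2^a * (1+R) ^ (-a) * (1+(Nn z:ℝ)) ^ (-b)) else 0)]
        have heq : ∀ z : Vtx d, (if Nn z ≤ m₁ then
              ENNReal.ofReal (2^a * (1+R) ^ (-a) * (1+(Nn z:ℝ)) ^ (-b)) else 0)
            = ENNReal.ofReal (2^a * (1+R) ^ (-a)) *
              (if Nn z ≤ m₁ then ENNReal.ofReal ((1+(Nn z:ℝ)) ^ (-b)) else 0) := fun z =>
          ite_ofReal_mul (by positivity) _ _
        rw [tsum_congr heq, ENNReal.tsum_mul_left]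
        calc ENNReal.ofReal (2^a * (1+R) ^ (-a)) *
              (∑' z : Vtx d, if Nn z ≤ m₁ then ENNReal.ofReal ((1+(Nn z:ℝ)) ^ (-b)) else 0)
            ≤ ENNReal.ofReal (2^a * (1+R) ^ (-a)) *
              ENNReal.ofReal (Kb * ((1:ℝ)+m₁) ^ ((d:ℝ)-b)) := mul_le_mul_right (hballb m₁) _
          _ = ENNReal.ofReal (2^a * (1+R) ^ (-a) * (Kb * ((1:ℝ)+m₁) ^ ((d:ℝ)-b))) :=
              (ENNReal.ofReal_mul (by positivity)).symm
          _ ≤ ENNReal.ofReal ((2^a * Kb * 2^((d:ℝ)-b)) * (1+R) ^ ((d:ℝ)-(a+b))) := by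
              apply ENNReal.ofReal_le_ofReal
              have hmp : ((1:ℝ)+m₁) ^ ((d:ℝ)-b) ≤ 2^((d:ℝ)-b) * (1+R) ^ ((d:ℝ)-b) := by
                calc ((1:ℝ)+m₁) ^ ((d:ℝ)-b) ≤ (2*(1+R)) ^ ((d:ℝ)-b) :=
                      Real.rpow_le_rpow (by positivity) hm₁R (by linarith)
                  _ = 2^((d:ℝ)-b) * (1+R) ^ ((d:ℝ)-b) :=
                      Real.mul_rpow (by norm_num) (by linarith)
              have hmerge : (1+R) ^ (-a) * (1+R) ^ ((d:ℝ)-b) = (1+R) ^ ((d:ℝ)-(a+b)) := by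
                rw [rpow_merge h1R]
                congr 1
                ring
              calc 2^a * (1+R) ^ (-a) * (Kb * ((1:ℝ)+m₁) ^ ((d:ℝ)-b))
                  ≤ 2^a * (1+R) ^ (-a) * (Kb * (2^((d:ℝ)-b) * (1+R) ^ ((d:ℝ)-b))) := by
                    apply mul_le_mul_of_nonneg_left _ (by positivity)
                    apply mul_le_mul_of_nonneg_left hmp hKb.le
                _ = (2^a * Kb * 2^((d:ℝ)-b)) * ((1+R) ^ (-a) * (1+R) ^ ((d:ℝ)-b)) := by ring
                _ = (2^a * Kb * 2^((d:ℝ)-b)) * (1+R) ^ ((d:ℝ)-(a+b)) := by rw [hmerge]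
      have hT3 : (∑' y : Vtx d, (if m₂ ≤ Nn y then
            ENNReal.ofReal ((1+(Nn y:ℝ)) ^ (-(a+b))) else 0))
          ≤ ENNReal.ofReal ((Kt * (4*(d:ℝ))^((a+b)-(d:ℝ))) * (1+R) ^ ((d:ℝ)-(a+b))) := by
        calc (∑' y : Vtx d, (if m₂ ≤ Nn y then
              ENNReal.ofReal ((1+(Nn y:ℝ)) ^ (-(a+b))) else 0))
            ≤ ENNReal.ofReal (Kt * ((1:ℝ)+m₂) ^ ((d:ℝ)-(a+b))) := htail m₂
          _ ≤ ENNReal.ofReal ((Kt * (4*(d:ℝ))^((a+b)-(d:ℝ))) * (1+R) ^ ((d:ℝ)-(a+b))) := by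
              apply ENNReal.ofReal_le_ofReal
              have h4d : (0:ℝ) < 4*(d:ℝ) := by linarith
              have hq : (0:ℝ) < (1+R)/(4*(d:ℝ)) := by positivity
              have hstep : ((1:ℝ)+m₂) ^ ((d:ℝ)-(a+b))
                  ≤ ((1+R)/(4*(d:ℝ))) ^ ((d:ℝ)-(a+b)) :=
                Real.rpow_le_rpow_of_nonpos hq hm₂R (by linarith)
              have hsplit : ((1+R)/(4*(d:ℝ))) ^ ((d:ℝ)-(a+b))
                  = (4*(d:ℝ))^((a+b)-(d:ℝ)) * (1+R) ^ ((d:ℝ)-(a+b)) := by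
                rw [Real.div_rpow h1R.le h4d.le,
                  show (a+b)-(d:ℝ) = -((d:ℝ)-(a+b)) by ring,
                  Real.rpow_neg h4d.le, div_eq_mul_inv, mul_comm]
              calc Kt * ((1:ℝ)+m₂) ^ ((d:ℝ)-(a+b))
                  ≤ Kt * (((1+R)/(4*(d:ℝ))) ^ ((d:ℝ)-(a+b))) :=
                    mul_le_mul_of_nonneg_left hstep hKt.le
                _ = (Kt * (4*(d:ℝ))^((a+b)-(d:ℝ))) * (1+R) ^ ((d:ℝ)-(a+b)) := by
                    rw [hsplit]
                    ring
      have hT4 : (∑' y : Vtx d, (if m₂ ≤ Nn (x-y) then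
            ENNReal.ofReal ((1+(Nn (x-y):ℝ)) ^ (-(a+b))) else 0))
          ≤ ENNReal.ofReal ((Kt * (4*(d:ℝ))^((a+b)-(d:ℝ))) * (1+R) ^ ((d:ℝ)-(a+b))) := by
        rw [reindex x (fun z => if m₂ ≤ Nn z then
          ENNReal.ofReal ((1+(Nn z:ℝ)) ^ (-(a+b))) else 0)]
        exact hT3
      have hpt : ∀ y : Vtx d, ENNReal.ofReal (f y * g (x - y))
          ≤ ENNReal.ofReal (c₁*c₂) *
            ((if Nn y ≤ m₁ then
              ENNReal.ofReal (2^b * (1+R) ^ (-b) * (1+(Nn y:ℝ)) ^ (-a)) else 0)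
            + (if Nn (x-y) ≤ m₁ then
              ENNReal.ofReal (2^a * (1+R) ^ (-a) * (1+(Nn (x-y):ℝ)) ^ (-b)) else 0)
            + (if m₂ ≤ Nn y then ENNReal.ofReal ((1+(Nn y:ℝ)) ^ (-(a+b))) else 0)
            + (if m₂ ≤ Nn (x-y) then
              ENNReal.ofReal ((1+(Nn (x-y):ℝ)) ^ (-(a+b))) else 0)) := by
        intro y
        calc ENNReal.ofReal (f y * g (x - y))
            ≤ ENNReal.ofReal (c₁*c₂ * ((1 + znorm y) ^ (-a) * (1 + znorm (x-y)) ^ (-b))) :=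
              ENNReal.ofReal_le_ofReal (hprod f g hf hg x y)
          _ = ENNReal.ofReal (c₁*c₂) *
              ENNReal.ofReal ((1 + znorm y) ^ (-a) * (1 + znorm (x-y)) ^ (-b)) :=
              ENNReal.ofReal_mul (by positivity)
          _ ≤ _ := mul_le_mul_right (ptII hd hb hab x y m₁ m₂ hm₁ hm₂) _
      calc (∑' y : Vtx d, ENNReal.ofReal (f y * g (x - y)))
          ≤ ∑' y : Vtx d, (ENNReal.ofReal (c₁*c₂) *
            ((if Nn y ≤ m₁ then
              ENNReal.ofReal (2^b * (1+R) ^ (-b) * (1+(Nn y:ℝ)) ^ (-a)) else 0)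
            + (if Nn (x-y) ≤ m₁ then
              ENNReal.ofReal (2^a * (1+R) ^ (-a) * (1+(Nn (x-y):ℝ)) ^ (-b)) else 0)
            + (if m₂ ≤ Nn y then ENNReal.ofReal ((1+(Nn y:ℝ)) ^ (-(a+b))) else 0)
            + (if m₂ ≤ Nn (x-y) then
              ENNReal.ofReal ((1+(Nn (x-y):ℝ)) ^ (-(a+b))) else 0))) :=
            ENNReal.tsum_le_tsum hpt
        _ = ENNReal.ofReal (c₁*c₂) *
            ((∑' y : Vtx d, (if Nn y ≤ m₁ then
              ENNReal.ofReal (2^b * (1+R) ^ (-b) * (1+(Nn y:ℝ)) ^ (-a)) else 0))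
            + (∑' y : Vtx d, (if Nn (x-y) ≤ m₁ then
              ENNReal.ofReal (2^a * (1+R) ^ (-a) * (1+(Nn (x-y):ℝ)) ^ (-b)) else 0))
            + (∑' y : Vtx d, (if m₂ ≤ Nn y then
              ENNReal.ofReal ((1+(Nn y:ℝ)) ^ (-(a+b))) else 0))
            + (∑' y : Vtx d, (if m₂ ≤ Nn (x-y) then
              ENNReal.ofReal ((1+(Nn (x-y):ℝ)) ^ (-(a+b))) else 0))) := by
            rw [ENNReal.tsum_mul_left, ENNReal.tsum_add, ENNReal.tsum_add, ENNReal.tsum_add]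
        _ ≤ ENNReal.ofReal (c₁*c₂) *
            (ENNReal.ofReal ((2^b * Ka * 2^((d:ℝ)-a)) * (1+R) ^ ((d:ℝ)-(a+b)))
            + ENNReal.ofReal ((2^a * Kb * 2^((d:ℝ)-b)) * (1+R) ^ ((d:ℝ)-(a+b)))
            + ENNReal.ofReal ((Kt * (4*(d:ℝ))^((a+b)-(d:ℝ))) * (1+R) ^ ((d:ℝ)-(a+b)))
            + ENNReal.ofReal ((Kt * (4*(d:ℝ))^((a+b)-(d:ℝ))) * (1+R) ^ ((d:ℝ)-(a+b)))) :=
            mul_le_mul_right (add_le_add (add_le_add (add_le_add hT1 hT2) hT3) hT4) _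
        _ = ENNReal.ofReal (c₁*c₂ *
            ((2^b * Ka * 2^((d:ℝ)-a)) * (1+R) ^ ((d:ℝ)-(a+b))
            + (2^a * Kb * 2^((d:ℝ)-b)) * (1+R) ^ ((d:ℝ)-(a+b))
            + (Kt * (4*(d:ℝ))^((a+b)-(d:ℝ))) * (1+R) ^ ((d:ℝ)-(a+b))
            + (Kt * (4*(d:ℝ))^((a+b)-(d:ℝ))) * (1+R) ^ ((d:ℝ)-(a+b)))) := by
            rw [← ENNReal.ofReal_add (by positivity) (by positivity),
              ← ENNReal.ofReal_add (by positivity) (by positivity),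
              ← ENNReal.ofReal_add (by positivity) (by positivity),
              ← ENNReal.ofReal_mul (by positivity)]
        _ = ENNReal.ofReal (c₁ * c₂ * ((2^b * Ka * 2^((d:ℝ)-a)) + (2^a * Kb * 2^((d:ℝ)-b))
            + Kt * (4*(d:ℝ))^((a+b)-(d:ℝ)) + Kt * (4*(d:ℝ))^((a+b)-(d:ℝ)))
            * (1+R) ^ ((d:ℝ)-(a+b))) := by
            congr 1
            ring
    · exact ⟨1, one_pos, fun f g hf hg x =>
        ⟨fun h => absurd h hcase1, fun h1 h2 => absurd ⟨h1, h2⟩ hcase2⟩⟩
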